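/- Let h : ℂ → ℂ be a polynomial function of degree at least 1 and let m be a natural number. Then the circle integral ∮_{|ω| = R} g_m(ω)/h(ω) dω tends to 0 as R → ∞. -/

import Mathlib

open Complex Finset Filter

/-- `g m ω = ω^m (Log(1 - 1/ω) + ∑_{k=1}^m 1/(k ω^k))`. -/
noncomputable def g (m : ℕ) (ω : ℂ) : ℂ :=
  ω ^ m * (Complex.log (1 - 1 / ω) + ∑ k ∈ Finset.Icc 1 m, 1 / ((k : ℂ) * ω ^ k))

lemma g_bound (m : ℕ) (z : ℂ) (hz : 2 ≤ ‖z‖) : ‖g m z‖ ≤ 2 / ‖z‖ := by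
  unfold g
  have hz0 : z ≠ 0 := by
    intro h; rw [h, norm_zero] at hz; linarith
  set w : ℂ := z⁻¹ with hw
  have hwn : ‖w‖ = ‖z‖⁻¹ := norm_inv z
  have hw2 : ‖w‖ ≤ 1/2 := by
    rw [hwn]; rw [inv_le_comm₀ (by linarith) (by norm_num)]; linarith
  have hw1 : ‖w‖ < 1 := lt_of_le_of_lt hw2 (by norm_num)
  have hs := Complex.hasSum_taylorSeries_neg_log hw1
  have hsum0 : (∑ i ∈ Finset.range (m+1), w ^ i / (i : ℂ)) =
      ∑ k ∈ Finset.Icc 1 m, w ^ k / (k : ℂ) := by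
    have : Finset.range (m+1) = insert 0 (Finset.Icc 1 m) := by
      ext i; simp; omega
    rw [this, Finset.sum_insert (by simp)]
    simp
  have hs2 : HasSum (fun n : ℕ => w ^ (n + (m+1)) / ((n + (m+1) : ℕ) : ℂ))
      (-Complex.log (1 - w) - ∑ k ∈ Finset.Icc 1 m, w ^ k / (k : ℂ)) := by
    have h := (hasSum_nat_add_iff (f := fun n : ℕ => w ^ n / (n : ℂ)) (m+1)
      (g := -Complex.log (1 - w) - ∑ k ∈ Finset.Icc 1 m, w ^ k / (k : ℂ))).mpr
    exact h (by rw [hsum0, sub_add_cancel]; exact hs)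
  -- geometric bound
  have hgeom : HasSum (fun n : ℕ => ‖w‖ ^ (m+1) * ‖w‖ ^ n)
      (‖w‖ ^ (m+1) * (1 - ‖w‖)⁻¹) :=
    (hasSum_geometric_of_lt_one (norm_nonneg w) hw1).mul_left _
  have hterm : ∀ n : ℕ, ‖w ^ (n + (m+1)) / ((n + (m+1) : ℕ) : ℂ)‖
      ≤ ‖w‖ ^ (m+1) * ‖w‖ ^ n := by
    intro n
    rw [norm_div, norm_pow]
    have h1 : (1 : ℝ) ≤ ‖((n + (m+1) : ℕ) : ℂ)‖ := by
      rw [Complex.norm_natCast]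
      exact_mod_cast Nat.one_le_iff_ne_zero.mpr (by omega)
    calc ‖w‖ ^ (n + (m+1)) / ‖((n + (m+1) : ℕ) : ℂ)‖
        ≤ ‖w‖ ^ (n + (m+1)) / 1 := by
          exact div_le_div_of_nonneg_left (pow_nonneg (norm_nonneg _) _) one_pos h1
      _ = ‖w‖ ^ (m+1) * ‖w‖ ^ n := by rw [div_one, pow_add, mul_comm]
  have hnorm : ‖-Complex.log (1 - w) - ∑ k ∈ Finset.Icc 1 m, w ^ k / (k : ℂ)‖
      ≤ ‖w‖ ^ (m+1) * (1 - ‖w‖)⁻¹ := by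
    rw [← hs2.tsum_eq]
    have hsumm : Summable (fun n : ℕ => ‖w ^ (n + (m+1)) / ((n + (m+1) : ℕ) : ℂ)‖) :=
      Summable.of_nonneg_of_le (fun n => norm_nonneg _) hterm hgeom.summable
    calc ‖∑' n, w ^ (n + (m+1)) / ((n + (m+1) : ℕ) : ℂ)‖
        ≤ ∑' n, ‖w ^ (n + (m+1)) / ((n + (m+1) : ℕ) : ℂ)‖ := norm_tsum_le_tsum_norm hsumm
      _ ≤ ∑' n, ‖w‖ ^ (m+1) * ‖w‖ ^ n := Summable.tsum_le_tsum hterm hsumm hgeom.summable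
      _ = ‖w‖ ^ (m+1) * (1 - ‖w‖)⁻¹ := hgeom.tsum_eq
  -- rewrite g's inner term
  have hinner : Complex.log (1 - 1 / z) + ∑ k ∈ Finset.Icc 1 m, 1 / ((k : ℂ) * z ^ k)
      = -(-Complex.log (1 - w) - ∑ k ∈ Finset.Icc 1 m, w ^ k / (k : ℂ)) := by
    rw [neg_sub, sub_neg_eq_add, one_div z, add_comm]
    congr 1
    · apply Finset.sum_congr rfl
      intro k _
      rw [one_div, mul_inv, div_eq_mul_inv, inv_pow, mul_comm]
  rw [hinner, norm_mul, norm_neg, norm_pow]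
  have h2 : (1 - ‖w‖)⁻¹ ≤ 2 := by
    rw [inv_le_comm₀ (by linarith) (by norm_num)]; linarith
  calc ‖z‖ ^ m * ‖-Complex.log (1 - w) - ∑ k ∈ Finset.Icc 1 m, w ^ k / (k : ℂ)‖
      ≤ ‖z‖ ^ m * (‖w‖ ^ (m+1) * 2) := by
        apply mul_le_mul_of_nonneg_left _ (pow_nonneg (norm_nonneg _) _)
        calc ‖_ - _‖ ≤ ‖w‖ ^ (m+1) * (1 - ‖w‖)⁻¹ := hnorm
          _ ≤ ‖w‖ ^ (m+1) * 2 := by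
              exact mul_le_mul_of_nonneg_left h2 (pow_nonneg (norm_nonneg _) _)
    _ = 2 / ‖z‖ := by
        have hzm : ‖z‖ ^ m ≠ 0 := pow_ne_zero _ (by linarith)
        rw [hwn, inv_pow, pow_succ, mul_inv]
        have h3 : ‖z‖ ^ m * ((‖z‖ ^ m)⁻¹ * ‖z‖⁻¹ * 2) =
            (‖z‖ ^ m * (‖z‖ ^ m)⁻¹) * (‖z‖⁻¹ * 2) := by ring
        rw [h3, mul_inv_cancel₀ hzm, one_mul, div_eq_mul_inv, mul_comm]

lemma poly_eventually_ge (q : Polynomial ℂ) (hq : q ≠ 0) :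
    ∃ c > (0:ℝ), ∃ R₀ : ℝ, ∀ z : ℂ, R₀ ≤ ‖z‖ → c ≤ ‖q.eval z‖ := by
  by_cases hdeg : 0 < q.degree
  · have ht : Filter.Tendsto (fun z : ℂ => ‖q.eval z‖)
        (Filter.comap norm Filter.atTop) Filter.atTop :=
      q.tendsto_norm_atTop hdeg tendsto_comap
    have hev : ∀ᶠ z : ℂ in Filter.comap norm Filter.atTop, 1 ≤ ‖q.eval z‖ :=
      ht.eventually (eventually_ge_atTop 1)
    rw [Filter.eventually_comap] at hev
    rw [Filter.eventually_atTop] at hev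
    obtain ⟨R₀, hR₀⟩ := hev
    exact ⟨1, one_pos, R₀, fun z hz => hR₀ ‖z‖ hz z rfl⟩
  · push_neg at hdeg
    have := Polynomial.eq_C_of_degree_le_zero hdeg
    refine ⟨‖q.coeff 0‖, ?_, 0, fun z _ => ?_⟩
    · rw [gt_iff_lt, norm_pos_iff]
      intro h
      apply hq
      rw [this, h, map_zero]
    · rw [this]; simp

lemma poly_lower (p : Polynomial ℂ) (hp : 1 ≤ p.natDegree) :
    ∃ c > (0:ℝ), ∃ R₀ : ℝ, ∀ z : ℂ, R₀ ≤ ‖z‖ → c * ‖z‖ ≤ ‖p.eval z‖ := by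
  have hq0 : p.divX ≠ 0 := by
    intro h
    rw [Polynomial.divX_eq_zero_iff] at h
    have : p.natDegree = 0 := by rw [h]; exact Polynomial.natDegree_C _
    omega
  obtain ⟨c, hc, R₁, hR₁⟩ := poly_eventually_ge p.divX hq0
  refine ⟨c / 2, by linarith, max R₁ (max 1 (2 * ‖p.coeff 0‖ / c)), fun z hz => ?_⟩
  have hz1 : R₁ ≤ ‖z‖ := le_trans (le_max_left _ _) hz
  have hz2 : 1 ≤ ‖z‖ := le_trans (le_trans (le_max_left _ _) (le_max_right _ _)) hz
  have hz3 : 2 * ‖p.coeff 0‖ / c ≤ ‖z‖ :=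
    le_trans (le_trans (le_max_right _ _) (le_max_right _ _)) hz
  have hev : p.eval z = z * p.divX.eval z + p.coeff 0 := by
    have h := congrArg (Polynomial.eval z) p.X_mul_divX_add
    simp only [Polynomial.eval_add, Polynomial.eval_mul, Polynomial.eval_X,
      Polynomial.eval_C] at h
    rw [← h]
  rw [hev]
  have h1 : c * ‖z‖ ≤ ‖z * p.divX.eval z‖ := by
    rw [norm_mul, mul_comm]
    exact mul_le_mul_of_nonneg_left (hR₁ z hz1) (norm_nonneg z)
  have h2 : ‖p.coeff 0‖ ≤ c / 2 * ‖z‖ := by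
    rw [div_le_iff₀ hc] at hz3
    nlinarith
  calc c / 2 * ‖z‖ = c * ‖z‖ - c / 2 * ‖z‖ := by ring
    _ ≤ ‖z * p.divX.eval z‖ - ‖p.coeff 0‖ := by
        apply sub_le_sub h1 h2
    _ ≤ ‖z * p.divX.eval z + p.coeff 0‖ := by
        have h4 := norm_add_le (z * p.divX.eval z + (p.coeff 0 : ℂ)) (-(p.coeff 0 : ℂ))
        simp only [add_neg_cancel_right, norm_neg] at h4
        linarith

theorem circleIntegral_g_div_poly_tendsto_zero
    (p : Polynomial ℂ) (hp : 1 ≤ p.natDegree) (m : ℕ) :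
    Filter.Tendsto (fun R : ℝ => ∮ z in C(0, R), g m z / p.eval z)
      Filter.atTop (nhds 0) := by
  obtain ⟨c, hc, R₀, hR₀⟩ := poly_lower p hp
  apply squeeze_zero_norm' (a := fun R : ℝ => (4 * Real.pi / c) / R)
  · filter_upwards [Filter.eventually_ge_atTop (max 2 R₀)] with R hR
    have hR2 : (2:ℝ) ≤ R := le_trans (le_max_left _ _) hR
    have hRR0 : R₀ ≤ R := le_trans (le_max_right _ _) hR
    have hRpos : (0:ℝ) < R := by linarith
    have key : ∀ z ∈ Metric.sphere (0:ℂ) R, ‖g m z / p.eval z‖ ≤ 2 / (c * R ^ 2) := by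
      intro z hzs
      rw [mem_sphere_zero_iff_norm] at hzs
      rw [norm_div]
      have hg : ‖g m z‖ ≤ 2 / R := by
        have := g_bound m z (by rw [hzs]; exact hR2)
        rwa [hzs] at this
      have hpz : c * R ≤ ‖Polynomial.eval z p‖ := by
        have := hR₀ z (by rw [hzs]; exact hRR0)
        rwa [hzs] at this
      have hcR : (0:ℝ) < c * R := by positivity
      calc ‖g m z‖ / ‖Polynomial.eval z p‖ ≤ (2 / R) / (c * R) :=
            div_le_div₀ (by positivity) hg hcR hpz
        _ = 2 / (c * R ^ 2) := by field_simp
    have hint := circleIntegral.norm_integral_le_of_norm_le_const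
      (le_of_lt hRpos) key
    calc ‖∮ z in C(0, R), g m z / Polynomial.eval z p‖
        ≤ 2 * Real.pi * R * (2 / (c * R ^ 2)) := hint
      _ = (4 * Real.pi / c) / R := by field_simp; ring
  · exact Filter.Tendsto.div_atTop tendsto_const_nhds tendsto_id
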